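/- Let (Ω, F, P) be a probability space and {A_k}_{k≥1} a family of events satisfying: (1) ∑_{k≥1} P(A_k) = ∞; (2) P(limsup_k A_k) is either 0 or 1; (3) there exist constants c1, c2 > 0 such that for each j ≥ 1 there is a finite set S_j of indices with (i) ∑_{i ∈ S_j} P(A_j ∩ A_i) ≤ c1·P(A_j), and (ii) P(A_j ∩ A_k) ≤ c2·P(A_j)·P(A_k) for every k ≥ j+1 with k ∉ S_j. Then P(limsup_k A_k) = 1, i.e. infinitely many of the events A_k occur with probability 1. -/

import Mathlib

open MeasureTheory Filter

open scoped ENNReal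

/-- Cauchy–Schwarz for lower integrals of `ℝ≥0∞`-valued functions. -/
private lemma cs_lintegral {Ω : Type*} [MeasurableSpace Ω] (μ : Measure Ω)
    (f g : Ω → ℝ≥0∞) (hf : Measurable f) (hg : Measurable g) :
    (∫⁻ ω, f ω * g ω ∂μ) ^ 2 ≤ (∫⁻ ω, f ω ^ 2 ∂μ) * (∫⁻ ω, g ω ^ 2 ∂μ) := by
  have hpq : (2 : ℝ).HolderConjugate 2 := Real.HolderConjugate.two_two
  have h := ENNReal.lintegral_mul_le_Lp_mul_Lq μ hpq hf.aemeasurable hg.aemeasurable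
  simp only [Pi.mul_apply] at h
  have hsq : ∀ F : Ω → ℝ≥0∞, (∫⁻ ω, F ω ^ (2 : ℝ) ∂μ) = ∫⁻ ω, F ω ^ 2 ∂μ := by
    intro F
    refine lintegral_congr fun ω => ?_
    rw [← ENNReal.rpow_natCast (F ω) 2]
    norm_num
  calc (∫⁻ ω, f ω * g ω ∂μ) ^ 2
      ≤ ((∫⁻ ω, f ω ^ (2 : ℝ) ∂μ) ^ (1 / 2 : ℝ) * (∫⁻ ω, g ω ^ (2 : ℝ) ∂μ) ^ (1 / 2 : ℝ)) ^ 2 :=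
        by gcongr
    _ = (∫⁻ ω, f ω ^ 2 ∂μ) * (∫⁻ ω, g ω ^ 2 ∂μ) := by
        rw [hsq f, hsq g, mul_pow,
          ← ENNReal.rpow_natCast ((∫⁻ ω, f ω ^ 2 ∂μ) ^ (1 / 2 : ℝ)) 2,
          ← ENNReal.rpow_natCast ((∫⁻ ω, g ω ^ 2 ∂μ) ^ (1 / 2 : ℝ)) 2,
          ← ENNReal.rpow_mul, ← ENNReal.rpow_mul]
        norm_num

/-- The Chung–Erdős inequality for finitely many events. -/
private lemma chung_erdos {Ω : Type*} [MeasurableSpace Ω] (P : Measure Ω)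
    (A : ℕ → Set Ω) (hA : ∀ k : ℕ, MeasurableSet (A k)) (t : Finset ℕ) :
    (∑ k ∈ t, P (A k)) ^ 2 ≤ (∑ j ∈ t, ∑ k ∈ t, P (A j ∩ A k)) * P (⋃ k ∈ t, A k) := by
  classical
  set f : Ω → ℝ≥0∞ := fun ω => ∑ k ∈ t, (A k).indicator 1 ω with hfdef
  set U : Set Ω := ⋃ k ∈ t, A k with hUdef
  have hUm : MeasurableSet U := t.measurableSet_biUnion fun k _ => hA k
  set g : Ω → ℝ≥0∞ := U.indicator 1 with hgdef
  have hf : Measurable f := Finset.measurable_sum t fun k _ => measurable_one.indicator (hA k)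
  have hg : Measurable g := measurable_one.indicator hUm
  have hfg : ∀ ω, f ω * g ω = f ω := by
    intro ω
    by_cases hω : ω ∈ U
    · simp [hgdef, Set.indicator_of_mem hω]
    · have hf0 : f ω = 0 := Finset.sum_eq_zero fun k hk =>
        Set.indicator_of_notMem (fun h => hω (Set.mem_biUnion hk h)) _
      simp [hf0]
  have hIf : (∫⁻ ω, f ω ∂P) = ∑ k ∈ t, P (A k) := by
    rw [hfdef, lintegral_finset_sum t fun k _ => measurable_one.indicator (hA k)]
    exact Finset.sum_congr rfl fun k _ => lintegral_indicator_one (hA k)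
  have hIf2 : (∫⁻ ω, f ω ^ 2 ∂P) = ∑ j ∈ t, ∑ k ∈ t, P (A j ∩ A k) := by
    have hptw : ∀ ω, f ω ^ 2 = ∑ j ∈ t, ∑ k ∈ t, (A j ∩ A k).indicator (1 : Ω → ℝ≥0∞) ω := by
      intro ω
      rw [hfdef, sq, Finset.sum_mul_sum]
      exact Finset.sum_congr rfl fun j _ => Finset.sum_congr rfl fun k _ => by
        rw [Set.inter_indicator_one]; rfl
    calc (∫⁻ ω, f ω ^ 2 ∂P)
        = ∫⁻ ω, ∑ j ∈ t, ∑ k ∈ t, (A j ∩ A k).indicator (1 : Ω → ℝ≥0∞) ω ∂P :=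
          lintegral_congr hptw
      _ = ∑ j ∈ t, ∑ k ∈ t, P (A j ∩ A k) := by
          rw [lintegral_finset_sum t fun j _ =>
            Finset.measurable_sum t fun k _ => measurable_one.indicator ((hA j).inter (hA k))]
          refine Finset.sum_congr rfl fun j _ => ?_
          rw [lintegral_finset_sum t fun k _ => measurable_one.indicator ((hA j).inter (hA k))]
          exact Finset.sum_congr rfl fun k _ => lintegral_indicator_one ((hA j).inter (hA k))
  have hIg2 : (∫⁻ ω, g ω ^ 2 ∂P) = P U := by
    have hptw : ∀ ω, g ω ^ 2 = U.indicator (1 : Ω → ℝ≥0∞) ω := by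
      intro ω
      by_cases hω : ω ∈ U <;> simp [hgdef, Set.indicator_apply, hω]
    rw [lintegral_congr hptw, lintegral_indicator_one hUm]
  calc (∑ k ∈ t, P (A k)) ^ 2 = (∫⁻ ω, f ω * g ω ∂P) ^ 2 := by
        rw [lintegral_congr hfg, hIf]
    _ ≤ (∫⁻ ω, f ω ^ 2 ∂P) * (∫⁻ ω, g ω ^ 2 ∂P) := cs_lintegral P f g hf hg
    _ = (∑ j ∈ t, ∑ k ∈ t, P (A j ∩ A k)) * P U := by rw [hIf2, hIg2]

/-- Lemma 5.3 of the paper: a generalized (Chung–Erdős type) second Borel–Cantelli lemma. -/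
theorem stmt14 {Ω : Type*} [MeasurableSpace Ω] (P : Measure Ω) [IsProbabilityMeasure P]
    (A : ℕ → Set Ω) (hA : ∀ k : ℕ, MeasurableSet (A k))
    (h1 : (∑' k : ℕ, P (A k)) = ⊤)
    (h2 : P (limsup A atTop) = 0 ∨ P (limsup A atTop) = 1)
    (h3 : ∃ c1 c2 : ℝ≥0∞, 0 < c1 ∧ c1 ≠ ⊤ ∧ 0 < c2 ∧ c2 ≠ ⊤ ∧
      ∀ j : ℕ, ∃ S : Finset ℕ,
        (∑ i ∈ S, P (A j ∩ A i)) ≤ c1 * P (A j) ∧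
        ∀ k : ℕ, j + 1 ≤ k → k ∉ S → P (A j ∩ A k) ≤ c2 * P (A j) * P (A k)) :
    P (limsup A atTop) = 1 := by
  classical
  obtain ⟨c1, c2, hc10, hc1t, hc20, hc2t, hSex⟩ := h3
  have h4ne0 : (4 : ℝ≥0∞) * c2 ≠ 0 := mul_ne_zero (by norm_num) hc20.ne'
  have h4net : (4 : ℝ≥0∞) * c2 ≠ ⊤ := ENNReal.mul_ne_top (by norm_num) hc2t
  -- Key step: a uniform lower bound on the measure of all tails of the union.
  have key : ∀ m : ℕ, ((4 : ℝ≥0∞) * c2)⁻¹ ≤ P (⋃ k, ⋃ (_ : m ≤ k), A k) := by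
    intro m
    -- the tail series diverges
    have htail : (∑' k : ℕ, P (A (k + m))) = ⊤ := by
      by_contra h
      have hbound : ∀ N : ℕ, (∑ i ∈ Finset.range N, P (A i))
          ≤ (∑ i ∈ Finset.range m, P (A i)) + ∑' k : ℕ, P (A (k + m)) := by
        intro N
        calc (∑ i ∈ Finset.range N, P (A i))
            ≤ ∑ i ∈ Finset.range (m + N), P (A i) :=
              Finset.sum_le_sum_of_subset (Finset.range_subset_range.mpr (Nat.le_add_left _ _))
          _ = (∑ i ∈ Finset.range m, P (A i)) + ∑ i ∈ Finset.range N, P (A (m + i)) :=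
              Finset.sum_range_add _ m N
          _ ≤ (∑ i ∈ Finset.range m, P (A i)) + ∑' k : ℕ, P (A (k + m)) := by
              refine add_le_add_right ?_ _
              refine le_trans (le_of_eq (Finset.sum_congr rfl fun i _ => by rw [add_comm])) ?_
              exact ENNReal.sum_le_tsum _
      have hle : (∑' k : ℕ, P (A k))
          ≤ (∑ i ∈ Finset.range m, P (A i)) + ∑' k : ℕ, P (A (k + m)) := by
        rw [ENNReal.tsum_eq_iSup_nat]
        exact iSup_le hbound
      rw [h1] at hle
      have hne : (∑ i ∈ Finset.range m, P (A i)) + (∑' k : ℕ, P (A (k + m))) ≠ ⊤ :=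
        ENNReal.add_ne_top.mpr ⟨(ENNReal.sum_lt_top.mpr fun i _ => measure_lt_top P _).ne, h⟩
      exact hne (eq_top_iff.mpr hle)
    set b : ℝ≥0∞ := (1 + c1) / c2 with hb
    have hbt : b < ⊤ := by
      rw [hb]
      exact (ENNReal.div_lt_top (by simp [ENNReal.add_ne_top, hc1t]) hc20.ne')
    have hb0 : 0 < b := ENNReal.div_pos (by simp) hc2t
    obtain ⟨n, hn⟩ : ∃ n : ℕ, b < ∑ i ∈ Finset.range n, P (A (i + m)) := by
      have : b < ∑' k : ℕ, P (A (k + m)) := htail ▸ hbt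
      rwa [ENNReal.tsum_eq_iSup_nat, lt_iSup_iff] at this
    set t : Finset ℕ := Finset.Ico m (m + n) with ht
    set Sg : ℝ≥0∞ := ∑ k ∈ t, P (A k) with hSg
    have hSgeq : Sg = ∑ i ∈ Finset.range n, P (A (i + m)) := by
      rw [hSg, ht, Finset.sum_Ico_eq_sum_range]
      simp only [Nat.add_sub_cancel_left]
      exact Finset.sum_congr rfl fun i _ => by rw [add_comm]
    have hSgb : b < Sg := by rw [hSgeq]; exact hn
    have hSg0 : Sg ≠ 0 := (hb0.trans hSgb).ne'
    have hSgtop : Sg ≠ ⊤ := (ENNReal.sum_lt_top.mpr fun k _ => measure_lt_top P _).ne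
    -- bound on the double sum
    have hDle : (∑ j ∈ t, ∑ k ∈ t, P (A j ∩ A k))
        ≤ 2 * ((1 + c1) * Sg + c2 * Sg ^ 2) := by
      have step1 : ∀ j, (∑ k ∈ t.filter (fun k => j < k), P (A j ∩ A k))
          ≤ c1 * P (A j) + c2 * P (A j) * Sg := by
        intro j
        obtain ⟨S, hS1, hS2⟩ := hSex j
        set Q : Finset ℕ := t.filter (fun k => j < k) with hQ
        calc (∑ k ∈ Q, P (A j ∩ A k))
            = (∑ k ∈ Q ∩ S, P (A j ∩ A k)) + ∑ k ∈ Q \ S, P (A j ∩ A k) :=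
              (Finset.sum_inter_add_sum_sdiff Q S _).symm
          _ ≤ c1 * P (A j) + c2 * P (A j) * Sg := by
              refine add_le_add ?_ ?_
              · exact le_trans
                  (Finset.sum_le_sum_of_subset Finset.inter_subset_right) hS1
              · calc (∑ k ∈ Q \ S, P (A j ∩ A k))
                    ≤ ∑ k ∈ Q \ S, c2 * P (A j) * P (A k) := by
                      refine Finset.sum_le_sum fun k hk => ?_
                      obtain ⟨hkQ, hkS⟩ := Finset.mem_sdiff.mp hk
                      exact hS2 k (Finset.mem_filter.mp hkQ).2 hkS
                  _ = c2 * P (A j) * ∑ k ∈ Q \ S, P (A k) := by rw [Finset.mul_sum]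
                  _ ≤ c2 * P (A j) * Sg := by
                      refine mul_le_mul_right ?_ _
                      refine Finset.sum_le_sum_of_subset ?_
                      exact Finset.Subset.trans Finset.sdiff_subset (Finset.filter_subset _ _)
      have stepdiag : ∀ j, (∑ k ∈ t.filter (fun k => j ≤ k), P (A j ∩ A k))
          ≤ P (A j) + ∑ k ∈ t.filter (fun k => j < k), P (A j ∩ A k) := by
        intro j
        have hsub : t.filter (fun k => j ≤ k) ⊆ insert j (t.filter (fun k => j < k)) := by
          intro k hk
          obtain ⟨hkt, hjk⟩ := Finset.mem_filter.mp hk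
          rcases eq_or_lt_of_le hjk with rfl | hlt
          · exact Finset.mem_insert_self _ _
          · exact Finset.mem_insert_of_mem (Finset.mem_filter.mpr ⟨hkt, hlt⟩)
        calc (∑ k ∈ t.filter (fun k => j ≤ k), P (A j ∩ A k))
            ≤ ∑ k ∈ insert j (t.filter (fun k => j < k)), P (A j ∩ A k) :=
              Finset.sum_le_sum_of_subset hsub
          _ = P (A j ∩ A j) + ∑ k ∈ t.filter (fun k => j < k), P (A j ∩ A k) :=
              Finset.sum_insert (by simp)
          _ = P (A j) + ∑ k ∈ t.filter (fun k => j < k), P (A j ∩ A k) := by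
              rw [Set.inter_self]
      have hswap : (∑ j ∈ t, ∑ k ∈ t.filter (fun k => ¬ j ≤ k), P (A j ∩ A k))
          = ∑ j ∈ t, ∑ k ∈ t.filter (fun k => j < k), P (A k ∩ A j) := by
        refine Finset.sum_comm' ?_
        intro x y
        simp only [Finset.mem_filter, not_le]
        tauto
      have hswap' : (∑ j ∈ t, ∑ k ∈ t.filter (fun k => ¬ j ≤ k), P (A j ∩ A k))
          = ∑ j ∈ t, ∑ k ∈ t.filter (fun k => j < k), P (A j ∩ A k) := by
        rw [hswap]
        exact Finset.sum_congr rfl fun j _ => Finset.sum_congr rfl fun k _ => by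
          rw [Set.inter_comm]
      have hX : (∑ j ∈ t, ((1 + c1) * P (A j) + c2 * P (A j) * Sg))
          = (1 + c1) * Sg + c2 * Sg ^ 2 := by
        rw [Finset.sum_add_distrib, ← Finset.mul_sum, ← hSg]
        congr 1
        calc (∑ j ∈ t, c2 * P (A j) * Sg) = (∑ j ∈ t, c2 * P (A j)) * Sg :=
              (Finset.sum_mul _ _ _).symm
          _ = c2 * Sg * Sg := by rw [← Finset.mul_sum, ← hSg]
          _ = c2 * Sg ^ 2 := by rw [sq, mul_assoc]
      calc (∑ j ∈ t, ∑ k ∈ t, P (A j ∩ A k))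
          = ∑ j ∈ t, ((∑ k ∈ t.filter (fun k => j ≤ k), P (A j ∩ A k))
            + ∑ k ∈ t.filter (fun k => ¬ j ≤ k), P (A j ∩ A k)) :=
            Finset.sum_congr rfl fun j _ =>
              (Finset.sum_filter_add_sum_filter_not t _ _).symm
        _ = (∑ j ∈ t, ∑ k ∈ t.filter (fun k => j ≤ k), P (A j ∩ A k))
            + ∑ j ∈ t, ∑ k ∈ t.filter (fun k => ¬ j ≤ k), P (A j ∩ A k) :=
            Finset.sum_add_distrib
        _ ≤ (∑ j ∈ t, ((1 + c1) * P (A j) + c2 * P (A j) * Sg))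
            + ∑ j ∈ t, ((1 + c1) * P (A j) + c2 * P (A j) * Sg) := by
            refine add_le_add ?_ ?_
            · refine Finset.sum_le_sum fun j _ => ?_
              calc (∑ k ∈ t.filter (fun k => j ≤ k), P (A j ∩ A k))
                  ≤ P (A j) + ∑ k ∈ t.filter (fun k => j < k), P (A j ∩ A k) := stepdiag j
                _ ≤ P (A j) + (c1 * P (A j) + c2 * P (A j) * Sg) :=
                    add_le_add_right (step1 j) _
                _ = (1 + c1) * P (A j) + c2 * P (A j) * Sg := by ring
            · rw [hswap']
              refine Finset.sum_le_sum fun j _ => ?_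
              calc (∑ k ∈ t.filter (fun k => j < k), P (A j ∩ A k))
                  ≤ c1 * P (A j) + c2 * P (A j) * Sg := step1 j
                _ ≤ (1 + c1) * P (A j) + c2 * P (A j) * Sg := by
                    refine add_le_add_left ?_ _
                    refine mul_le_mul_left ?_ _
                    exact le_add_self
        _ = 2 * ((1 + c1) * Sg + c2 * Sg ^ 2) := by rw [hX]; ring
    -- from Sg ≥ b we get (1+c1)Sg ≤ c2 Sg²
    have h1c : (1 + c1) * Sg ≤ c2 * Sg ^ 2 := by
      have hcb : (1 + c1) ≤ c2 * Sg := by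
        calc (1 + c1) = c2 * b := by rw [hb, ENNReal.mul_div_cancel hc20.ne' hc2t]
          _ ≤ c2 * Sg := mul_le_mul_right hSgb.le _
      calc (1 + c1) * Sg ≤ (c2 * Sg) * Sg := mul_le_mul_left hcb _
        _ = c2 * Sg ^ 2 := by rw [sq, mul_assoc]
    have hCE := chung_erdos P A hA t
    have hfinal : 1 * Sg ^ 2 ≤ (P (⋃ k ∈ t, A k) * (4 * c2)) * Sg ^ 2 := by
      rw [one_mul]
      calc Sg ^ 2 ≤ (∑ j ∈ t, ∑ k ∈ t, P (A j ∩ A k)) * P (⋃ k ∈ t, A k) := hCE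
        _ ≤ (2 * ((1 + c1) * Sg + c2 * Sg ^ 2)) * P (⋃ k ∈ t, A k) :=
            mul_le_mul_left hDle _
        _ ≤ (2 * (c2 * Sg ^ 2 + c2 * Sg ^ 2)) * P (⋃ k ∈ t, A k) := by
            refine mul_le_mul_left ?_ _
            exact mul_le_mul_right (add_le_add_left h1c _) _
        _ = (P (⋃ k ∈ t, A k) * (4 * c2)) * Sg ^ 2 := by ring
    have hSg20 : Sg ^ 2 ≠ 0 := pow_ne_zero _ hSg0
    have hSg2t : Sg ^ 2 ≠ ⊤ := by
      rw [sq]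
      exact ENNReal.mul_ne_top hSgtop hSgtop
    have hone : 1 ≤ P (⋃ k ∈ t, A k) * (4 * c2) :=
      (ENNReal.mul_le_mul_iff_left hSg20 hSg2t).mp hfinal
    have hle : ((4 : ℝ≥0∞) * c2)⁻¹ ≤ P (⋃ k ∈ t, A k) := by
      calc ((4 : ℝ≥0∞) * c2)⁻¹ = 1 * (4 * c2)⁻¹ := (one_mul _).symm
        _ ≤ (P (⋃ k ∈ t, A k) * (4 * c2)) * (4 * c2)⁻¹ := mul_le_mul_left hone _
        _ = P (⋃ k ∈ t, A k) := by
            rw [mul_assoc, ENNReal.mul_inv_cancel h4ne0 h4net, mul_one]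
    refine hle.trans (measure_mono ?_)
    refine Set.iUnion₂_subset fun k hk => ?_
    exact Set.subset_iUnion₂ (s := fun k _ => A k) k (Finset.mem_Ico.mp hk).1
  -- conclude via continuity from above
  have hls : limsup A atTop = ⋂ m, ⋃ k, ⋃ (_ : m ≤ k), A k := by
    rw [limsup_eq_iInf_iSup_of_nat]
    simp only [Set.iInf_eq_iInter, Set.iSup_eq_iUnion]
  have hmeas : ∀ m : ℕ, NullMeasurableSet (⋃ k, ⋃ (_ : m ≤ k), A k) P := fun m =>
    (MeasurableSet.iUnion fun k => MeasurableSet.iUnion fun _ => hA k).nullMeasurableSet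
  have hanti : Antitone fun m : ℕ => ⋃ k, ⋃ (_ : m ≤ k), A k := by
    intro a b hab
    exact Set.iUnion₂_subset fun k hk =>
      Set.subset_iUnion₂ (s := fun k _ => A k) k (hab.trans hk)
  have hInter := Directed.measure_iInter (μ := P) hmeas hanti.directed_ge
    ⟨0, measure_ne_top P _⟩
  have hpos : (0 : ℝ≥0∞) < P (limsup A atTop) := by
    rw [hls, hInter]
    refine lt_of_lt_of_le ?_ (le_iInf key)
    exact ENNReal.inv_pos.mpr h4net
  rcases h2 with h0 | hone
  · exact absurd h0 hpos.ne'
  · exact hone
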